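/- Let m≥1 be an integer, let c>0, and let h be Gamma-distributed with shape m and rate c (density c^m t^{m−1} e^{−ct}/(m−1)! on [0,∞)), independent of a nonnegative real random variable I. Let L_I(s)=E[e^{−sI}] denote the Laplace transform of I, which is smooth on (0,∞). Then for every a>0, P(h ≥ aI) = Σ_{k=0}^{m−1} ((−ca)^k/k!) · L_I^{(k)}(ca), where L_I^{(k)} is the k-th derivative of L_I. -/

import Mathlib

open MeasureTheory ProbabilityTheory Filter Real
open scoped ProbabilityTheory


lemma aux_pow_exp_le (k : ℕ) {x : ℝ} (hx : 0 ≤ x) :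
    x ^ k * Real.exp (-x) ≤ k.factorial := by
  have h := Real.pow_div_factorial_le_exp x hx k
  have hk : (0:ℝ) < k.factorial := by positivity
  rw [Real.exp_neg]
  rw [div_le_iff₀ hk] at h
  calc x ^ k * (Real.exp x)⁻¹ ≤ (Real.exp x * k.factorial) * (Real.exp x)⁻¹ := by
        gcongr
    _ = k.factorial := by field_simp [Real.exp_ne_zero]

lemma aux_pow_exp_le' (k : ℕ) {s x : ℝ} (hs : 0 < s) (hx : 0 ≤ x) :
    x ^ k * Real.exp (-(s * x)) ≤ k.factorial / s ^ k := by
  have h := aux_pow_exp_le k (x := s * x) (by positivity)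
  rw [mul_pow] at h
  rw [le_div_iff₀ (by positivity)]
  calc x ^ k * Real.exp (-(s*x)) * s ^ k = s ^ k * x ^ k * Real.exp (-(s*x)) := by ring
    _ ≤ _ := h

lemma aux_hasDerivAt_F (n : ℕ) (c : ℝ) (t : ℝ) :
    HasDerivAt (fun t => Real.exp (-(c*t)) * ∑ k ∈ Finset.range (n+1), (c*t)^k / k.factorial)
      (-(c^(n+1) / n.factorial * t^n * Real.exp (-(c*t)))) t := by
  have hct : HasDerivAt (fun t : ℝ => c * t) c t := by
    simpa using (hasDerivAt_id t).const_mul c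
  have hexp : HasDerivAt (fun t : ℝ => Real.exp (-(c*t))) (-c * Real.exp (-(c*t))) t := by
    have := (hct.neg).exp
    simpa [mul_comm] using this
  have term : ∀ k : ℕ, HasDerivAt (fun t : ℝ => (c*t)^k / k.factorial)
      ((k * (c*t)^(k-1) * c) / k.factorial) t := by
    intro k
    exact ((hasDerivAt_pow k (c*t)).comp t hct).div_const _
  have hS : HasDerivAt (fun t : ℝ => ∑ k ∈ Finset.range (n+1), (c*t)^k / k.factorial)
      (c * ∑ k ∈ Finset.range n, (c*t)^k / k.factorial) t := by
    have := HasDerivAt.fun_sum (fun k (_ : k ∈ Finset.range (n+1)) => term k)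
    convert this using 1
    · rfl
    · rfl
    rw [Finset.sum_range_succ' (fun k => ((k:ℝ) * (c*t)^(k-1) * c) / k.factorial) n]
    simp only [Nat.cast_zero, zero_mul, Nat.factorial_zero, Nat.cast_one, zero_div, add_zero,
      Nat.add_sub_cancel]
    rw [Finset.mul_sum]
    refine Finset.sum_congr rfl fun k _ => ?_
    have : ((k+1).factorial : ℝ) = (k+1) * k.factorial := by
      rw [Nat.factorial_succ]; push_cast; ring
    rw [this]
    have hk : ((k:ℝ)+1) ≠ 0 := by positivity
    field_simp
    push_cast; ring
  have := hexp.fun_mul hS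
  convert this using 1
  · rfl
  · rfl
  rw [Finset.sum_range_succ]
  have : c * (c*t)^n = c^(n+1) * t^n := by rw [mul_pow]; ring
  field_simp
  ring


lemma aux_tendsto_F (n : ℕ) {c : ℝ} (hc : 0 < c) :
    Tendsto (fun t => Real.exp (-(c*t)) * ∑ k ∈ Finset.range (n+1), (c*t)^k / k.factorial)
      atTop (nhds 0) := by
  have hct : Tendsto (fun t : ℝ => c * t) atTop atTop :=
    Tendsto.const_mul_atTop hc tendsto_id
  have key : ∀ k : ℕ, Tendsto (fun t : ℝ => Real.exp (-(c*t)) * ((c*t)^k / k.factorial))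
      atTop (nhds 0) := by
    intro k
    have := (Real.tendsto_pow_mul_exp_neg_atTop_nhds_zero k).comp hct
    have h2 := this.div_const (k.factorial : ℝ)
    rw [zero_div] at h2
    refine h2.congr fun t => ?_
    simp [Function.comp]; ring
  have := tendsto_finset_sum (Finset.range (n+1)) (fun k _ => key k)
  rw [Finset.sum_const_zero] at this
  refine this.congr fun t => ?_
  rw [Finset.mul_sum]

lemma aux_gamma_tail {m : ℕ} (hm : 1 ≤ m) {c : ℝ} (hc : 0 < c) {x : ℝ} (hx : 0 ≤ x) :
    (gammaMeasure (m : ℝ) c) (Set.Ici x)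
      = ENNReal.ofReal (Real.exp (-(c*x)) * ∑ k ∈ Finset.range m, (c*x)^k / k.factorial) := by
  obtain ⟨n, rfl⟩ : ∃ n, m = n + 1 := ⟨m - 1, (Nat.succ_pred_eq_of_pos hm).symm⟩
  set F : ℝ → ℝ := fun t => Real.exp (-(c*t)) * ∑ k ∈ Finset.range (n+1), (c*t)^k / k.factorial
    with hF
  set f : ℝ → ℝ := fun t => c^(n+1) / n.factorial * t^n * Real.exp (-(c*t)) with hf
  have hderiv : ∀ t ∈ Set.Ici x, HasDerivAt (fun t => -F t) (f t) t := by
    intro t _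
    have := (aux_hasDerivAt_F n c t).fun_neg
    simpa using this
  have hpos : ∀ t ∈ Set.Ioi x, 0 ≤ f t := by
    intro t ht
    have ht0 : 0 ≤ t := le_trans hx (le_of_lt ht)
    positivity
  have htend : Tendsto (fun t => -F t) atTop (nhds 0) := by
    have := (aux_tendsto_F n hc).neg
    rwa [neg_zero] at this
  have hint : IntegrableOn f (Set.Ioi x) := by
    exact integrableOn_Ioi_deriv_of_nonneg' hderiv hpos htend
  have hval : ∫ t in Set.Ioi x, f t = F x := by
    rw [integral_Ioi_of_hasDerivAt_of_nonneg' hderiv hpos htend]; simp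
  -- now the measure side
  rw [gammaMeasure, withDensity_apply _ measurableSet_Ici]
  have hcongr : ∀ t ∈ Set.Ici x, gammaPDF ((n:ℝ)+1) c t = ENNReal.ofReal (f t) := by
    intro t ht
    have ht0 : (0:ℝ) ≤ t := le_trans hx ht
    rw [gammaPDF_of_nonneg ht0]
    congr 1
    have h1 : Real.Gamma ((n:ℝ)+1) = n.factorial := Real.Gamma_nat_eq_factorial n
    have h2 : c ^ ((n:ℝ)+1) = c ^ (n+1) := by
      rw [show ((n:ℝ)+1) = ((n+1 : ℕ):ℝ) by push_cast; ring, Real.rpow_natCast]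
    have h3 : t ^ ((n:ℝ)+1-1) = t ^ n := by
      rw [show ((n:ℝ)+1-1) = ((n:ℕ):ℝ) by push_cast; ring, Real.rpow_natCast]
    rw [h1, h2, h3, hf]
  push_cast
  rw [setLIntegral_congr_fun_ae measurableSet_Ici (ae_of_all _ hcongr)]
  rw [← ofReal_integral_eq_lintegral_ofReal]
  · rw [integral_Ici_eq_integral_Ioi, hval]
  · exact Iff.mpr integrableOn_Ici_iff_integrableOn_Ioi hint
  · filter_upwards [ae_restrict_mem measurableSet_Ici] with t ht
    exact le_trans (le_refl 0) (by
      have ht0 : 0 ≤ t := le_trans hx ht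
      rw [hf]; positivity)

/-- Success probability under Nakagami-`m` fading: if `h` is Gamma-distributed with
integer shape `m` and rate `c`, independent of the nonnegative interference `I`,
then `P(h ≥ aI) = ∑_{k=0}^{m-1} ((-ca)^k/k!)·L_I^{(k)}(ca)`, where `L_I` is the
Laplace transform of `I`. -/
theorem stmt_13
    {Ω : Type*} [MeasureSpace Ω] [IsProbabilityMeasure (ℙ : Measure Ω)]
    (m : ℕ) (hm : 1 ≤ m) (c : ℝ) (hc : 0 < c)
    (h I : Ω → ℝ)
    (hh_meas : Measurable h) (hI_meas : Measurable I)
    (hI_nonneg : ∀ ω, 0 ≤ I ω)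
    (hindep : IndepFun h I ℙ)
    (hh_gamma : Measure.map h ℙ = gammaMeasure (m : ℝ) c)
    (L : ℝ → ℝ) (hL : ∀ s, L s = ∫ ω, Real.exp (-(s * I ω)))
    (a : ℝ) (ha : 0 < a) :
    (ℙ {ω | a * I ω ≤ h ω}).toReal =
      ∑ k ∈ Finset.range m, ((-(c * a)) ^ k / Nat.factorial k) * iteratedDeriv k L (c * a) := by
  set G : ℕ → ℝ → ℝ := fun k s => ∫ ω, (-(I ω))^k * Real.exp (-(s * I ω)) with hG
  have hmeas : ∀ (k : ℕ) (s : ℝ),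
      Measurable (fun ω => (-(I ω))^k * Real.exp (-(s * I ω))) := fun k s =>
    (hI_meas.neg.pow_const k).mul ((hI_meas.const_mul s).neg.exp)
  have hintk : ∀ (k : ℕ) {s : ℝ}, 0 < s →
      Integrable (fun ω => (-(I ω))^k * Real.exp (-(s * I ω))) ℙ := by
    intro k s hs
    refine ⟨(hmeas k s).aestronglyMeasurable, ?_⟩
    apply MeasureTheory.HasFiniteIntegral.of_bounded (C := (k.factorial : ℝ) / s ^ k)
    filter_upwards with ω
    rw [Real.norm_eq_abs, abs_mul, abs_pow, abs_neg, abs_of_nonneg (hI_nonneg ω),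
      abs_of_nonneg (Real.exp_nonneg _)]
    exact aux_pow_exp_le' k hs (hI_nonneg ω)
  -- derivative of G
  have hDeriv : ∀ (k : ℕ) {s : ℝ}, 0 < s → HasDerivAt (G k) (G (k+1) s) s := by
    intro k s hs
    have hball : ∀ x ∈ Metric.ball s (s/2), s/2 < x := by
      intro x hx
      rw [Metric.mem_ball, Real.dist_eq, abs_lt] at hx
      linarith [hx.1]
    have := hasDerivAt_integral_of_dominated_loc_of_deriv_le (μ := (ℙ : Measure Ω))
      (F := fun x ω => (-(I ω))^k * Real.exp (-(x * I ω)))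
      (F' := fun x ω => (-(I ω))^(k+1) * Real.exp (-(x * I ω)))
      (x₀ := s) (s := Metric.ball s (s/2))
      (bound := fun _ => ((k+1).factorial : ℝ) / (s/2) ^ (k+1))
      (Metric.ball_mem_nhds _ (by positivity))
      (Filter.Eventually.of_forall fun x => (hmeas k x).aestronglyMeasurable)
      (hintk k hs)
      ((hmeas (k+1) s).aestronglyMeasurable)
      ?_ (integrable_const _) ?_
    · exact this.2
    · filter_upwards with ω
      intro x hx
      have hx2 : s/2 < x := hball x hx
      rw [Real.norm_eq_abs, abs_mul, abs_pow, abs_neg, abs_of_nonneg (hI_nonneg ω),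
        abs_of_nonneg (Real.exp_nonneg _)]
      have hle : Real.exp (-(x * I ω)) ≤ Real.exp (-(s/2 * I ω)) :=
        Real.exp_le_exp.mpr (by nlinarith [hI_nonneg ω])
      calc I ω ^ (k+1) * Real.exp (-(x * I ω))
          ≤ I ω ^ (k+1) * Real.exp (-(s/2 * I ω)) :=
            mul_le_mul_of_nonneg_left hle (pow_nonneg (hI_nonneg ω) _)
        _ ≤ ((k+1).factorial : ℝ) / (s/2) ^ (k+1) :=
            aux_pow_exp_le' (k+1) (by positivity) (hI_nonneg ω)
    · filter_upwards with ω
      intro x _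
      have h1 : HasDerivAt (fun x : ℝ => Real.exp (-(x * I ω)))
          (Real.exp (-(x * I ω)) * (-(I ω))) x :=
        ((hasDerivAt_mul_const (I ω)).neg).exp
      have := h1.const_mul ((-(I ω))^k)
      convert this using 1
      · rfl
      rw [pow_succ]; ring
  -- iterated derivatives of L
  have hiter : ∀ (k : ℕ) (s : ℝ), 0 < s → iteratedDeriv k L s = G k s := by
    intro k
    induction k with
    | zero =>
      intro s hs
      rw [iteratedDeriv_zero, hL s, hG]
      simp
    | succ k ih =>
      intro s hs
      rw [iteratedDeriv_succ]
      have hev : iteratedDeriv k L =ᶠ[nhds s] G k := by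
        filter_upwards [Ioi_mem_nhds hs] with t ht
        exact ih t ht
      rw [hev.deriv_eq]
      exact (hDeriv k hs).deriv
  -- probability as an integral of the tail
  set Fn : ℝ → ℝ := fun x => Real.exp (-(c*x)) * ∑ k ∈ Finset.range m, (c*x)^k / k.factorial
    with hFn
  have hca : 0 < c * a := by positivity
  have hFnM : Measurable Fn := by
    apply Measurable.mul
    · exact ((measurable_id.const_mul c).neg).exp
    · exact Finset.measurable_sum _ fun k _ =>
        ((measurable_id.const_mul c).pow_const k).div_const _
  have hFnNN : ∀ x : ℝ, 0 ≤ x → 0 ≤ Fn x := by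
    intro x hx
    rw [hFn]
    have : (0:ℝ) ≤ c * x := by positivity
    positivity
  have hFnBound : ∀ x : ℝ, 0 ≤ x → Fn x ≤ m := by
    intro x hx
    simp only [hFn, Finset.mul_sum]
    calc ∑ k ∈ Finset.range m, Real.exp (-(c*x)) * ((c*x)^k / k.factorial)
        ≤ ∑ k ∈ Finset.range m, 1 := by
          apply Finset.sum_le_sum
          intro k _
          have hcx : (0:ℝ) ≤ c * x := by positivity
          have hb := aux_pow_exp_le k hcx
          have hfac : (0:ℝ) < k.factorial := by positivity
          rw [mul_comm, div_mul_eq_mul_div, div_le_one hfac]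
          exact hb
      _ = m := by simp
  have hFnInt : Integrable (fun ω => Fn (a * I ω)) ℙ := by
    refine ⟨(hFnM.comp (hI_meas.const_mul a)).aestronglyMeasurable, ?_⟩
    apply MeasureTheory.HasFiniteIntegral.of_bounded (C := (m:ℝ))
    filter_upwards with ω
    have h0 : (0:ℝ) ≤ a * I ω := by have := hI_nonneg ω; positivity
    rw [Real.norm_eq_abs, abs_of_nonneg (hFnNN _ h0)]
    exact hFnBound _ h0
  have key : (ℙ {ω | a * I ω ≤ h ω}).toReal = ∫ ω, Fn (a * I ω) := by
    have hpair : Measurable fun ω => (I ω, h ω) := hI_meas.prodMk hh_meas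
    have hS : MeasurableSet {p : ℝ × ℝ | a * p.1 ≤ p.2} :=
      measurableSet_le (measurable_fst.const_mul a) measurable_snd
    have hprod : Measure.map (fun ω => (I ω, h ω)) ℙ
        = (Measure.map I ℙ).prod (Measure.map h ℙ) :=
      (indepFun_iff_map_prod_eq_prod_map_map hI_meas.aemeasurable
        hh_meas.aemeasurable).mp hindep.symm
    have h1 : ℙ {ω | a * I ω ≤ h ω}
        = ((Measure.map I ℙ).prod (Measure.map h ℙ)) {p : ℝ × ℝ | a * p.1 ≤ p.2} := by
      rw [← hprod, Measure.map_apply hpair hS]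
      rfl
    rw [h1, Measure.prod_apply hS]
    have h2 : ∀ᵐ y ∂(Measure.map I ℙ),
        (Measure.map h ℙ) (Prod.mk y ⁻¹' {p : ℝ × ℝ | a * p.1 ≤ p.2})
          = ENNReal.ofReal (Fn (a * y)) := by
      have hae : ∀ᵐ y ∂(Measure.map I ℙ), 0 ≤ y := by
        rw [ae_map_iff hI_meas.aemeasurable measurableSet_Ici]
        exact Filter.Eventually.of_forall hI_nonneg
      filter_upwards [hae] with y hy
      have hpre : Prod.mk y ⁻¹' {p : ℝ × ℝ | a * p.1 ≤ p.2} = Set.Ici (a * y) := rfl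
      rw [hpre, hh_gamma, aux_gamma_tail hm hc (by positivity : (0:ℝ) ≤ a * y)]
    have hmg : Measurable fun y : ℝ => ENNReal.ofReal (Fn (a * y)) :=
      (hFnM.comp (measurable_id.const_mul a)).ennreal_ofReal
    rw [lintegral_congr_ae h2, lintegral_map hmg hI_meas,
      ← ofReal_integral_eq_lintegral_ofReal hFnInt
        (Filter.Eventually.of_forall fun ω => hFnNN _ (by have := hI_nonneg ω; positivity)),
      ENNReal.toReal_ofReal (integral_nonneg fun ω => hFnNN _ (by have := hI_nonneg ω; positivity))]
  rw [key]
  have hsum : ∀ ω, Fn (a * I ω) = ∑ k ∈ Finset.range m,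
      ((-(c*a))^k / k.factorial) * ((-(I ω))^k * Real.exp (-((c*a) * I ω))) := by
    intro ω
    simp only [hFn, Finset.mul_sum]
    refine Finset.sum_congr rfl fun k _ => ?_
    have h1 : c * (a * I ω) = (c*a) * I ω := by ring
    rw [h1]
    have h2 : ((c*a) * I ω)^k = (-(c*a))^k * (-(I ω))^k := by
      rw [← mul_pow, neg_mul_neg]
    rw [h2]; ring
  simp_rw [hsum]
  rw [integral_finset_sum _ (fun k _ => ((hintk k hca).const_mul _))]
  refine Finset.sum_congr rfl fun k hk => ?_
  rw [MeasureTheory.integral_const_mul, hiter k _ hca, hG]
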